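/- Let s : ℝ → ℝ, let h₀ : ℝ → ℝ be differentiable, let E : ℝ → ℝ → ℝ be continuously differentiable and satisfy ∂E/∂t (t,h) = s(E(t,h)) and E(0,h) = h for all t, h ∈ ℝ, and let F : ℝ → ℝ → ℝ be continuously differentiable and satisfy ∂F/∂t (t,h) = E(t,h) and F(0,h) = 0 for all t, h ∈ ℝ. Suppose y : ℝ × ℝ → ℝ is differentiable and satisfies the implicit relation x = y(x,t) + F(t, h₀(y(x,t))) for all (x,t), and that 1 + (∂F/∂h)(t, h₀(y(x,t))) · h₀'(y(x,t)) ≠ 0 for all (x,t). Then the function q(x,t) := E(t, h₀(y(x,t))) satisfies ∂q/∂t (x,t) + q(x,t) · ∂q/∂x (x,t) = s(q(x,t)) for all (x,t), and q(x,0) = h₀(x) for all x. -/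

import Mathlib

/-- Chain rule for a curried two-variable function along a curve `τ ↦ (τ, c τ)`. -/
private lemma hasDerivAt_comp2 (E : ℝ → ℝ → ℝ)
    (hG : Differentiable ℝ (fun p : ℝ × ℝ => E p.1 p.2))
    (c : ℝ → ℝ) (c' t : ℝ) (hc : HasDerivAt c c' t) :
    HasDerivAt (fun τ => E τ (c τ))
      (deriv (fun τ => E τ (c t)) t + deriv (fun h => E t h) (c t) * c') t := by
  have hfd := (hG (t, c t)).hasFDerivAt
  have hcurve : HasDerivAt (fun τ => (τ, c τ)) ((1 : ℝ), c') t :=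
    HasDerivAt.prodMk (hasDerivAt_id t) hc
  have hmain : HasDerivAt (fun τ => E τ (c τ))
      (fderiv ℝ (fun p : ℝ × ℝ => E p.1 p.2) (t, c t) (1, c')) t :=
    by have := hfd.comp_hasDerivAt t hcurve; exact this
  have h1 : HasDerivAt (fun τ => E τ (c t))
      (fderiv ℝ (fun p : ℝ × ℝ => E p.1 p.2) (t, c t) (1, 0)) t := by
    have hcv : HasDerivAt (fun τ : ℝ => (τ, c t)) ((1 : ℝ), (0 : ℝ)) t :=
      HasDerivAt.prodMk (hasDerivAt_id t) (hasDerivAt_const t (c t))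
    exact hfd.comp_hasDerivAt t hcv
  have h2 : HasDerivAt (fun h => E t h)
      (fderiv ℝ (fun p : ℝ × ℝ => E p.1 p.2) (t, c t) (0, 1)) (c t) := by
    have hcv : HasDerivAt (fun h : ℝ => (t, h)) ((0 : ℝ), (1 : ℝ)) (c t) :=
      HasDerivAt.prodMk (hasDerivAt_const (c t) t) (hasDerivAt_id (c t))
    exact hfd.comp_hasDerivAt (c t) hcv
  have hval : fderiv ℝ (fun p : ℝ × ℝ => E p.1 p.2) (t, c t) (1, c')
      = fderiv ℝ (fun p : ℝ × ℝ => E p.1 p.2) (t, c t) (1, 0)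
        + fderiv ℝ (fun p : ℝ × ℝ => E p.1 p.2) (t, c t) (0, 1) * c' := by
    have h : ((1 : ℝ), c') = ((1 : ℝ), (0 : ℝ)) + c' • ((0 : ℝ), (1 : ℝ)) := by
      simp [Prod.ext_iff]
    rw [h, map_add, map_smul, smul_eq_mul]; ring
  rw [h1.deriv, h2.deriv, ← hval]
  exact hmain

/-- Proposition 1: `q(x,t) = E (t, h₀ (y (x,t)))` solves the Burgers equation
with source term `s`, where `E` solves the equivalent ODE, `F` is the primitive
of `E` in `t`, and `y` satisfies the characteristic relation. -/
theorem stmt_2 (s : ℝ → ℝ) (h₀ : ℝ → ℝ) (hh₀ : Differentiable ℝ h₀)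
    (E F : ℝ → ℝ → ℝ)
    (hE : ContDiff ℝ 1 (fun p : ℝ × ℝ => E p.1 p.2))
    (hEt : ∀ t h : ℝ, deriv (fun t => E t h) t = s (E t h))
    (hE0 : ∀ h : ℝ, E 0 h = h)
    (hF : ContDiff ℝ 1 (fun p : ℝ × ℝ => F p.1 p.2))
    (hFt : ∀ t h : ℝ, deriv (fun t => F t h) t = E t h)
    (hF0 : ∀ h : ℝ, F 0 h = 0)
    (y : ℝ × ℝ → ℝ) (hy : Differentiable ℝ y)
    (hrel : ∀ x t : ℝ, x = y (x, t) + F t (h₀ (y (x, t))))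
    (hne : ∀ x t : ℝ,
      1 + deriv (fun h => F t h) (h₀ (y (x, t))) * deriv h₀ (y (x, t)) ≠ 0) :
    (∀ x t : ℝ,
        deriv (fun τ => E τ (h₀ (y (x, τ)))) t
          + E t (h₀ (y (x, t))) * deriv (fun ξ => E t (h₀ (y (ξ, t)))) x
          = s (E t (h₀ (y (x, t))))) ∧
      ∀ x : ℝ, E 0 (h₀ (y (x, 0))) = h₀ x := by
  have hEd : Differentiable ℝ (fun p : ℝ × ℝ => E p.1 p.2) := hE.differentiable one_ne_zero
  have hFd : Differentiable ℝ (fun p : ℝ × ℝ => F p.1 p.2) := hF.differentiable one_ne_zero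
  constructor
  · intro x t
    -- derivative of τ ↦ y (x, τ)
    have hyt : HasDerivAt (fun τ => y (x, τ)) (deriv (fun τ => y (x, τ)) t) t := by
      apply DifferentiableAt.hasDerivAt
      exact (hy (x, t)).comp t ((differentiableAt_const x).prodMk differentiableAt_id)
    -- derivative of ξ ↦ y (ξ, t)
    have hyx : HasDerivAt (fun ξ => y (ξ, t)) (deriv (fun ξ => y (ξ, t)) x) x := by
      apply DifferentiableAt.hasDerivAt
      exact (hy (x, t)).comp x (differentiableAt_id.prodMk (differentiableAt_const t))
    set yt := deriv (fun τ => y (x, τ)) t with hytdef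
    set yx := deriv (fun ξ => y (ξ, t)) x with hyxdef
    set yv := y (x, t) with hyvdef
    set h' := deriv h₀ yv with h'def
    -- derivative of τ ↦ h₀ (y (x, τ))
    have hct : HasDerivAt (fun τ => h₀ (y (x, τ))) (h' * yt) t :=
      (hh₀ yv).hasDerivAt.comp t hyt
    -- derivative of ξ ↦ h₀ (y (ξ, t))
    have hcx : HasDerivAt (fun ξ => h₀ (y (ξ, t))) (h' * yx) x :=
      (hh₀ yv).hasDerivAt.comp x hyx
    set Eh := deriv (fun h => E t h) (h₀ yv) with Ehdef
    set Fh := deriv (fun h => F t h) (h₀ yv) with Fhdef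
    set q := E t (h₀ yv) with qdef
    -- time derivative of q
    have hqt : HasDerivAt (fun τ => E τ (h₀ (y (x, τ))))
        (deriv (fun τ => E τ (h₀ (y (x, t)))) t + Eh * (h' * yt)) t :=
      hasDerivAt_comp2 E hEd (fun τ => h₀ (y (x, τ))) (h' * yt) t hct
    rw [hEt t (h₀ (y (x, t)))] at hqt
    -- spatial derivative of q
    have hEhD : DifferentiableAt ℝ (fun h => E t h) (h₀ yv) :=
      (hEd (t, h₀ yv)).comp (h₀ yv)
        ((differentiableAt_const t).prodMk differentiableAt_id)
    have hqx : HasDerivAt (fun ξ => E t (h₀ (y (ξ, t)))) (Eh * (h' * yx)) x :=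
      hEhD.hasDerivAt.comp x hcx
    -- time derivative of the characteristic relation
    have hFct : HasDerivAt (fun τ => F τ (h₀ (y (x, τ))))
        (deriv (fun τ => F τ (h₀ (y (x, t)))) t + Fh * (h' * yt)) t :=
      hasDerivAt_comp2 F hFd (fun τ => h₀ (y (x, τ))) (h' * yt) t hct
    rw [hFt t (h₀ (y (x, t)))] at hFct
    have hrelt : HasDerivAt (fun τ => y (x, τ) + F τ (h₀ (y (x, τ))))
        (yt + (q + Fh * (h' * yt))) t := hyt.add hFct
    have hconst : (fun τ => y (x, τ) + F τ (h₀ (y (x, τ)))) = fun _ => x :=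
      funext fun τ => (hrel x τ).symm
    rw [hconst] at hrelt
    have a1 : yt + (q + Fh * (h' * yt)) = 0 :=
      hrelt.unique (hasDerivAt_const t x)
    -- spatial derivative of the characteristic relation
    have hFhD : DifferentiableAt ℝ (fun h => F t h) (h₀ yv) :=
      (hFd (t, h₀ yv)).comp (h₀ yv)
        ((differentiableAt_const t).prodMk differentiableAt_id)
    have hFcx : HasDerivAt (fun ξ => F t (h₀ (y (ξ, t)))) (Fh * (h' * yx)) x :=
      hFhD.hasDerivAt.comp x hcx
    have hrelx : HasDerivAt (fun ξ => y (ξ, t) + F t (h₀ (y (ξ, t))))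
        (yx + Fh * (h' * yx)) x := hyx.add hFcx
    have hid : (fun ξ => y (ξ, t) + F t (h₀ (y (ξ, t)))) = fun ξ => ξ :=
      funext fun ξ => (hrel ξ t).symm
    rw [hid] at hrelx
    have a2 : yx + Fh * (h' * yx) = 1 :=
      hrelx.unique (hasDerivAt_id x)
    -- conclude
    have hne' : 1 + Fh * h' ≠ 0 := hne x t
    have key : yt + q * yx = 0 := by
      have h4 : (1 + Fh * h') * (yt + q * yx) = 0 := by
        linear_combination a1 + q * a2
      exact (mul_eq_zero.mp h4).resolve_left hne'
    rw [hqt.deriv, hqx.deriv]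
    linear_combination Eh * h' * key
  · intro x
    have h0 : y (x, 0) = x := by
      have h := hrel x 0
      rw [hF0] at h
      linarith
    rw [h0, hE0]
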